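/- In a finite abelian p-group, every independent set is strongly independent; hence independence and strong independence coincide in abelian p-groups. -/

import Mathlib

open Subgroup

def IsIndependent {G : Type*} [Group G] (A : Set G) : Prop :=
  ∀ a ∈ A, a ∉ Subgroup.closure (A \ {a})

def IsStronglyIndependent {G : Type*} [Group G] (A : Finset G) : Prop :=
  ∀ H : Subgroup G, (A : Set G) ⊆ H →
    ∀ C : Finset G, Subgroup.closure (C : Set G) = H → A.card ≤ C.card

private lemma pow_surj_subsingleton {p : ℕ} {W : Type*} [CommGroup W] [Finite W]
    (hW : IsPGroup p W) (h : ∀ x : W, ∃ y : W, y ^ p = x) : Subsingleton W := by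
  have hinj : Function.Injective (fun x : W => x ^ p) :=
    Finite.injective_iff_surjective.2 (fun x => h x)
  have hiter : ∀ (k : ℕ) (x : W), x ^ p ^ k = 1 → x = 1 := by
    intro k
    induction k with
    | zero => intro x hx; simpa using hx
    | succ n ih =>
      intro x hx
      have : (x ^ p ^ n) ^ p = 1 ^ p := by
        rw [← pow_mul, ← pow_succ]; simpa using hx
      exact ih x (hinj this)
  refine ⟨fun a b => ?_⟩
  have ha : a = 1 := by obtain ⟨k, hk⟩ := hW a; exact hiter k a hk
  have hb : b = 1 := by obtain ⟨k, hk⟩ := hW b; exact hiter k b hk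
  rw [ha, hb]

private lemma frattini_arg {p : ℕ} {G : Type*} [CommGroup G] [Finite G]
    (hG : IsPGroup p G) (L K : Subgroup G) (hLK : L ≤ K)
    (h : K ≤ L ⊔ K.map (powMonoidHom p)) : K ≤ L := by
  set L' : Subgroup ↥K := L.comap K.subtype with hL'
  have hsub : Subsingleton (↥K ⧸ L') := by
    refine pow_surj_subsingleton ((hG.to_subgroup K).to_quotient L') ?_
    intro q
    obtain ⟨x, rfl⟩ := QuotientGroup.mk_surjective q
    obtain ⟨y, hy, z, hz, hyz⟩ := Subgroup.mem_sup.1 (h x.2)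
    obtain ⟨w, hw, hwz⟩ := hz
    refine ⟨QuotientGroup.mk ⟨w, hw⟩, ?_⟩
    have hx : x = (⟨y, hLK hy⟩ : ↥K) * (⟨w, hw⟩ : ↥K) ^ p := by
      ext
      simp only [Subgroup.coe_mul, SubgroupClass.coe_pow]
      rw [← hyz, ← hwz]; rfl
    rw [← QuotientGroup.mk_pow, hx]
    have : ((⟨y, hLK hy⟩ : ↥K) : ↥K ⧸ L') = 1 := (QuotientGroup.eq_one_iff _).2 hy
    rw [QuotientGroup.mk_mul, this, one_mul]
  intro x hx
  have : ((⟨x, hx⟩ : ↥K) : ↥K ⧸ L') = 1 := Subsingleton.elim _ _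
  exact (QuotientGroup.eq_one_iff (⟨x, hx⟩ : ↥K)).1 this

private lemma cardV {p : ℕ} (W : Type*) [CommGroup W] [Finite W] :
    Nat.card (W ⧸ (powMonoidHom p : W →* W).range) =
      Nat.card (powMonoidHom p : W →* W).ker := by
  set φ : W →* W := powMonoidHom p
  have h1 : Nat.card W = Nat.card (W ⧸ φ.range) * Nat.card φ.range :=
    Subgroup.card_eq_card_quotient_mul_card_subgroup φ.range
  have h2 : Nat.card W = Nat.card (W ⧸ φ.ker) * Nat.card φ.ker :=
    Subgroup.card_eq_card_quotient_mul_card_subgroup φ.ker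
  have h3 : Nat.card (W ⧸ φ.ker) = Nat.card φ.range :=
    Nat.card_congr (QuotientGroup.quotientKerEquivRange φ).toEquiv
  have hpos : 0 < Nat.card φ.range := Nat.card_pos
  rw [h3] at h2
  rw [h2, mul_comm (Nat.card ↥φ.range)] at h1
  exact Nat.eq_of_mul_eq_mul_right hpos h1.symm

private lemma ker_mono {p : ℕ} {G : Type*} [CommGroup G] [Finite G]
    {K H : Subgroup G} (hKH : K ≤ H) :
    Nat.card (powMonoidHom p : ↥K →* ↥K).ker ≤
      Nat.card (powMonoidHom p : ↥H →* ↥H).ker := by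
  have hmem : ∀ x : (powMonoidHom p : ↥K →* ↥K).ker,
      (⟨x.1.1, hKH x.1.2⟩ : ↥H) ∈ (powMonoidHom p : ↥H →* ↥H).ker := by
    intro x
    have hx : (x.1 : ↥K) ^ p = 1 := x.2
    have : (x.1.1 : G) ^ p = 1 := by
      have := congrArg (Subtype.val) hx
      simpa using this
    simp only [MonoidHom.mem_ker, powMonoidHom_apply]
    ext
    simpa using this
  refine Nat.card_le_card_of_injective
    (fun x => ⟨⟨x.1.1, hKH x.1.2⟩, hmem x⟩) ?_
  intro a b hab
  ext
  simpa using congrArg (fun z => (z.1.1 : G)) hab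

section PhiConstruction

variable {G : Type*} [CommGroup G] [Finite G] (p : ℕ) (M : Subgroup G)

private lemma mk_pow_zero (w : ↥M) :
    (p : ℤ) • Additive.ofMul
      (QuotientGroup.mk w : ↥M ⧸ (powMonoidHom p : ↥M →* ↥M).range) = 0 := by
  rw [← ofMul_zpow]
  have : (QuotientGroup.mk w : ↥M ⧸ (powMonoidHom p : ↥M →* ↥M).range) ^ (p : ℤ) = 1 := by
    rw [zpow_natCast, ← QuotientGroup.mk_pow]
    exact (QuotientGroup.eq_one_iff _).2 ⟨w, rfl⟩
  rw [this]
  rfl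

private noncomputable def Phi (B : Finset G) (hB : (B : Set G) ⊆ M) :
    ((↥B → ZMod p)) →+
      Additive (↥M ⧸ (powMonoidHom p : ↥M →* ↥M).range) :=
  ∑ a : ↥B,
    ((ZMod.lift p ⟨zmultiplesHom _
        (Additive.ofMul (QuotientGroup.mk (⟨a.1, hB a.2⟩ : ↥M) :
          ↥M ⧸ (powMonoidHom p : ↥M →* ↥M).range)),
        mk_pow_zero p M _⟩).comp
      (Pi.evalAddMonoidHom (fun _ : ↥B => ZMod p) a))

private lemma Phi_apply (hp : p.Prime) (B : Finset G) (hB : (B : Set G) ⊆ M)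
    (c : ↥B → ZMod p) :
    Phi p M B hB c = ∑ a : ↥B, (c a).val •
      Additive.ofMul (QuotientGroup.mk (⟨a.1, hB a.2⟩ : ↥M) :
        ↥M ⧸ (powMonoidHom p : ↥M →* ↥M).range) := by
  haveI : NeZero p := ⟨hp.ne_zero⟩
  rw [Phi, AddMonoidHom.finset_sum_apply]
  refine Finset.sum_congr rfl fun a _ => ?_
  simp only [AddMonoidHom.comp_apply, Pi.evalAddMonoidHom_apply]
  have h1 : c a = (((c a).val : ℤ) : ZMod p) := by
    rw [Int.cast_natCast, ZMod.natCast_val, ZMod.cast_id]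
  conv_lhs => rw [h1]
  rw [ZMod.lift_coe, zmultiplesHom_apply, natCast_zsmul]

end PhiConstruction

private lemma A_side {G : Type*} [CommGroup G] [Finite G] {p : ℕ} (hp : p.Prime)
    (hG : IsPGroup p G) (A : Finset G) (hA : IsIndependent (A : Set G)) :
    p ^ A.card ≤ Nat.card (↥(closure (A : Set G)) ⧸
      (powMonoidHom p : ↥(closure (A : Set G)) →* ↥(closure (A : Set G))).range) := by
  haveI : NeZero p := ⟨hp.ne_zero⟩
  classical
  set K := closure (A : Set G) with hK
  have hB : (A : Set G) ⊆ K := subset_closure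
  set Φ := Phi p K A hB with hΦdef
  have hinj : Function.Injective Φ := by
    rw [injective_iff_map_eq_zero]
    intro c hc
    by_contra hne
    obtain ⟨a₀, ha₀⟩ := Function.ne_iff.1 hne
    rw [hΦdef, Phi_apply p K hp A hB] at hc
    have hprod : (∏ a : ↥A, (QuotientGroup.mk (⟨a.1, hB a.2⟩ : ↥K) :
        ↥K ⧸ (powMonoidHom p : ↥K →* ↥K).range) ^ (c a).val) = 1 := by
      rw [← ofMul_eq_zero, ofMul_prod]
      rw [← hc]
      exact Finset.sum_congr rfl fun a _ => (ofMul_pow _ _)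
    have hmem : (∏ a : ↥A, (⟨a.1, hB a.2⟩ : ↥K) ^ (c a).val) ∈
        (powMonoidHom p : ↥K →* ↥K).range := by
      rw [← QuotientGroup.eq_one_iff]
      rw [show ((↑(∏ a : ↥A, (⟨a.1, hB a.2⟩ : ↥K) ^ (c a).val) :
          ↥K ⧸ (powMonoidHom p : ↥K →* ↥K).range)) =
          (QuotientGroup.mk' _) (∏ a : ↥A, (⟨a.1, hB a.2⟩ : ↥K) ^ (c a).val) from rfl]
      rw [map_prod]
      simp only [map_pow, QuotientGroup.mk'_apply]
      exact hprod
    obtain ⟨y, hy⟩ := hmem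
    have hyG : (y : G) ^ p = ∏ a : ↥A, (a : G) ^ (c a).val := by
      have := congrArg K.subtype hy
      rw [map_prod] at this
      simpa using this
    set n₀ := (c a₀).val with hn₀
    have hc₀ : c a₀ ≠ 0 := by simpa using ha₀
    have hn₀pos : 0 < n₀ := Nat.pos_of_ne_zero (fun h => hc₀ ((ZMod.val_eq_zero _).1 h))
    have hn₀lt : n₀ < p := ZMod.val_lt _
    set L := closure ((A : Set G) \ {(a₀ : G)}) with hL
    have hLK : L ≤ K := closure_mono Set.diff_subset
    have hrel : ((a₀ : G)) ^ (n₀ : ℤ) ∈ L ⊔ K.map (powMonoidHom p) := by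
      have hsplit : (a₀ : G) ^ n₀ * (∏ a ∈ Finset.univ.erase a₀, (a : G) ^ (c a).val)
          = (y : G) ^ p := by
        rw [hyG]
        exact Finset.mul_prod_erase Finset.univ
          (fun a : ↥A => (a : G) ^ (c a).val) (Finset.mem_univ a₀)
      have h2 : (∏ a ∈ Finset.univ.erase a₀, (a : G) ^ (c a).val) ∈ L := by
        refine Subgroup.prod_mem _ fun a ha => ?_
        refine pow_mem (subset_closure ?_) _
        have hne : (a : G) ≠ (a₀ : G) := fun h => (Finset.mem_erase.1 ha).1 (Subtype.ext h)
        exact ⟨a.2, hne⟩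
      have h3 : (y : G) ^ p ∈ K.map (powMonoidHom p) := ⟨y, y.2, rfl⟩
      have h4 : (a₀ : G) ^ n₀ ∈ L ⊔ K.map (powMonoidHom p) := by
        rw [eq_mul_inv_of_mul_eq hsplit]
        exact mul_mem (le_sup_right (α := Subgroup G) h3)
          (inv_mem (le_sup_left (α := Subgroup G) h2))
      rw [zpow_natCast]
      exact h4
    obtain ⟨k, hk⟩ := hG (a₀ : G)
    have hcop : IsCoprime (n₀ : ℤ) ((p ^ k : ℕ) : ℤ) := by
      rw [Nat.isCoprime_iff_coprime]
      exact (Nat.coprime_comm.mp (hp.coprime_iff_not_dvd.2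
        (fun hdvd => absurd (Nat.le_of_dvd hn₀pos hdvd) (not_le.2 hn₀lt)))).pow_right k
    obtain ⟨u, v, huv⟩ := hcop
    have ha₀mem : (a₀ : G) ∈ L ⊔ K.map (powMonoidHom p) := by
      have hexp : ((n₀ : ℤ)) * u + (((p ^ k : ℕ) : ℤ)) * v = 1 := by
        rw [mul_comm ((n₀ : ℤ)) u, mul_comm (((p ^ k : ℕ) : ℤ)) v]
        exact huv
      have heq : (a₀ : G) = ((a₀ : G) ^ (n₀ : ℤ)) ^ u * ((a₀ : G) ^ ((p ^ k : ℕ) : ℤ)) ^ v := by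
        rw [← zpow_mul, ← zpow_mul, ← zpow_add, hexp, zpow_one]
      have h5 : ((a₀ : G) ^ ((p ^ k : ℕ) : ℤ)) = 1 := by rw [zpow_natCast, hk]
      rw [heq, h5, one_zpow, mul_one]
      exact zpow_mem hrel u
    have hsup : K ≤ L ⊔ K.map (powMonoidHom p) := by
      rw [hK]
      refine (closure_le _).2 fun b hb => ?_
      by_cases hb0 : b = (a₀ : G)
      · rw [hb0]; exact ha₀mem
      · exact le_sup_left (α := Subgroup G) (subset_closure ⟨hb, hb0⟩)
    have hKL : K ≤ L := frattini_arg hG L K hLK hsup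
    exact hA (a₀ : G) a₀.2 (hKL (subset_closure a₀.2))
  calc p ^ A.card = Nat.card (↥A → ZMod p) := by
        rw [Nat.card_pi]
        simp [Nat.card_zmod, Finset.prod_const, Finset.card_univ, Fintype.card_coe]
    _ ≤ Nat.card (Additive (↥K ⧸ (powMonoidHom p : ↥K →* ↥K).range)) :=
        Nat.card_le_card_of_injective Φ hinj
    _ = Nat.card (↥K ⧸ (powMonoidHom p : ↥K →* ↥K).range) :=
        Nat.card_congr Additive.toMul

private lemma C_side {G : Type*} [CommGroup G] [Finite G] {p : ℕ} (hp : p.Prime)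
    (C : Finset G) :
    Nat.card (↥(closure (C : Set G)) ⧸
      (powMonoidHom p : ↥(closure (C : Set G)) →* ↥(closure (C : Set G))).range)
      ≤ p ^ C.card := by
  haveI : NeZero p := ⟨hp.ne_zero⟩
  classical
  set M := closure (C : Set G) with hM
  have hB : (C : Set G) ⊆ M := subset_closure
  set Φ := Phi p M C hB with hΦdef
  have hsurj : Function.Surjective Φ := by
    have claim : ∀ (x : G) (hx : x ∈ closure (C : Set G)),
        ∃ d, Φ d = Additive.ofMul (QuotientGroup.mk (⟨x, hx⟩ : ↥M) :
          ↥M ⧸ (powMonoidHom p : ↥M →* ↥M).range) := by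
      intro x hx
      induction hx using closure_induction with
      | mem x hxC =>
        refine ⟨Pi.single (⟨x, hxC⟩ : ↥C) 1, ?_⟩
        rw [hΦdef, Phi_apply p M hp C hB]
        haveI : Fact (1 < p) := ⟨hp.one_lt⟩
        rw [Finset.sum_eq_single (⟨x, hxC⟩ : ↥C)]
        · simp [ZMod.val_one, one_nsmul]
        · intro b _ hb
          rw [Pi.single_eq_of_ne hb]
          simp [zero_nsmul]
        · intro h
          exact absurd (Finset.mem_univ _) h
      | one =>
        refine ⟨0, ?_⟩
        rw [map_zero]
        have : ((⟨1, Subgroup.one_mem M⟩ : ↥M)) = 1 := rfl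
        rw [show ((⟨(1 : G), _⟩ : ↥M)) = (1 : ↥M) from rfl]
        simp
      | mul x y hx hy ihx ihy =>
        obtain ⟨dx, hdx⟩ := ihx
        obtain ⟨dy, hdy⟩ := ihy
        refine ⟨dx + dy, ?_⟩
        rw [map_add, hdx, hdy]
        rw [show ((⟨x * y, _⟩ : ↥M)) = (⟨x, hx⟩ : ↥M) * (⟨y, hy⟩ : ↥M) from rfl]
        rw [QuotientGroup.mk_mul]
        simp [ofMul_mul]
      | inv x hx ihx =>
        obtain ⟨dx, hdx⟩ := ihx
        refine ⟨-dx, ?_⟩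
        rw [map_neg, hdx]
        rw [show ((⟨x⁻¹, _⟩ : ↥M)) = (⟨x, hx⟩ : ↥M)⁻¹ from rfl]
        rw [QuotientGroup.mk_inv]
        simp [ofMul_inv]
    intro v
    obtain ⟨w, hw⟩ := QuotientGroup.mk_surjective (Additive.toMul v)
    obtain ⟨d, hd⟩ := claim w.1 w.2
    refine ⟨d, ?_⟩
    rw [hd]
    rw [show ((⟨w.1, w.2⟩ : ↥M)) = w from rfl, hw]
    rfl
  calc Nat.card (↥M ⧸ (powMonoidHom p : ↥M →* ↥M).range)
      = Nat.card (Additive (↥M ⧸ (powMonoidHom p : ↥M →* ↥M).range)) :=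
        Nat.card_congr Additive.ofMul
    _ ≤ Nat.card (↥C → ZMod p) := Nat.card_le_card_of_surjective Φ hsurj
    _ = p ^ C.card := by
        rw [Nat.card_pi]
        simp [Nat.card_zmod, Finset.prod_const, Finset.card_univ, Fintype.card_coe]

theorem stronglyIndependent_of_independent_abelian_pGroup
    {G : Type*} [CommGroup G] [Finite G] (p : ℕ) (hp : p.Prime)
    (hG : IsPGroup p G) (A : Finset G) (hA : IsIndependent (A : Set G)) :
    IsStronglyIndependent A := by
  intro H hAH C hC
  have hKH : closure (A : Set G) ≤ H := (closure_le H).2 hAH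
  have h1 : p ^ A.card ≤ Nat.card (↥(closure (A : Set G)) ⧸
      (powMonoidHom p : ↥(closure (A : Set G)) →* ↥(closure (A : Set G))).range) :=
    A_side hp hG A hA
  have h2 := cardV (p := p) ↥(closure (A : Set G))
  have h3 := ker_mono (p := p) hKH
  have h4 := (cardV (p := p) ↥H).symm
  have h5 : Nat.card (↥H ⧸ (powMonoidHom p : ↥H →* ↥H).range) ≤ p ^ C.card := by
    have := C_side hp (G := G) C
    rw [hC] at this
    exact this
  have : p ^ A.card ≤ p ^ C.card := by
    calc p ^ A.card ≤ _ := h1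
      _ = _ := h2
      _ ≤ _ := h3
      _ = _ := h4
      _ ≤ p ^ C.card := h5
  exact (Nat.pow_le_pow_iff_right hp.one_lt).1 this
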